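/- Let R be a reduced ring that satisfies the ACC on annihilators and is right Archimedean. Then the power series ring R[[x]] is reduced and right Archimedean. -/

import Mathlib

open PowerSeries Finset


section Aux
variable {R : Type*} [Ring R] [IsReduced R]

lemma red_comm_zero {a b : R} (h : a * b = 0) : b * a = 0 := by
  have : (b * a) ^ 2 = 0 := by
    rw [sq, mul_assoc, ← mul_assoc a, h, zero_mul, mul_zero]
  exact IsReduced.eq_zero _ ⟨2, this⟩

lemma red_semicomm {a b : R} (h : a * b = 0) (r : R) : a * r * b = 0 := by
  have hba : b * a = 0 := red_comm_zero h
  have : (a * r * b) ^ 2 = 0 := by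
    rw [sq]
    calc a * r * b * (a * r * b) = a * r * (b * a) * (r * b) := by noncomm_ring
    _ = 0 := by rw [hba, mul_zero, zero_mul]
  exact IsReduced.eq_zero _ ⟨2, this⟩

omit [IsReduced R] in
lemma coeff_mul_eq_zero' {f g : PowerSeries R} {m n : ℕ}
    (hf : ∀ i < m, coeff i f = 0) (hg : ∀ j < n, coeff j g = 0) :
    ∀ t < m + n, coeff t (f * g) = 0 := by
  intro t ht
  rw [coeff_mul]
  apply Finset.sum_eq_zero
  rintro ⟨i, j⟩ hij
  rw [Finset.HasAntidiagonal.mem_antidiagonal] at hij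
  rcases lt_or_ge i m with hi | hi
  · rw [hf i hi, zero_mul]
  · have : j < n := by omega
    rw [hg j this, mul_zero]

omit [IsReduced R] in
lemma coeff_mul_lowest' {f g : PowerSeries R} {m n : ℕ}
    (hf : ∀ i < m, coeff i f = 0) (hg : ∀ j < n, coeff j g = 0) :
    coeff (m + n) (f * g) = coeff m f * coeff n g := by
  rw [coeff_mul]
  apply Finset.sum_eq_single_of_mem (m, n) (by rw [Finset.HasAntidiagonal.mem_antidiagonal])
  rintro ⟨i, j⟩ hij hne
  rw [Finset.HasAntidiagonal.mem_antidiagonal] at hij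
  rcases lt_or_ge i m with hi | hi
  · rw [hf i hi, zero_mul]
  · rcases lt_or_ge j n with h | h
    · rw [hg j h, mul_zero]
    · exfalso
      have him : i = m := by omega
      have hjn : j = n := by omega
      exact hne (by rw [him, hjn])

omit [IsReduced R] in
lemma pow_low {f : PowerSeries R} {m : ℕ} (hf : ∀ i < m, coeff i f = 0) :
    ∀ k, (∀ t < k * m, coeff t (f ^ k) = 0) ∧
      coeff (k * m) (f ^ k) = (coeff m f) ^ k := by
  intro k
  induction k with
  | zero => simp
  | succ k ih =>
    constructor
    · intro t ht
      rw [pow_succ]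
      exact coeff_mul_eq_zero' ih.1 hf t (by rw [Nat.succ_mul] at ht; omega)
    · rw [pow_succ, Nat.succ_mul, coeff_mul_lowest' ih.1 hf, ih.2, pow_succ]

lemma powerSeries_isReduced : IsReduced (PowerSeries R) := by
  classical
  refine ⟨fun f ⟨k, hk⟩ => ?_⟩
  by_contra hf
  have hex : ∃ m, coeff m f ≠ 0 := by
    by_contra h
    push_neg at h
    exact hf (PowerSeries.ext fun n => by simp [h n])
  set m := Nat.find hex with hm
  have hspec : coeff m f ≠ 0 := Nat.find_spec hex
  have hmin : ∀ i < m, coeff i f = 0 := fun i hi => by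
    by_contra h
    exact Nat.find_min hex hi h
  have hk0 : k ≠ 0 := by
    rintro rfl
    rw [pow_zero] at hk
    exact hf (by rw [← mul_one f, hk, mul_zero])
  have := (pow_low hmin k).2
  rw [hk] at this
  simp only [map_zero] at this
  exact hspec (IsReduced.eq_zero _ ⟨k, this.symm⟩)

lemma lemC (F : PowerSeries R) (N : ℕ) :
    ∀ (j n : ℕ) (h r : R), h * (constantCoeff F) ^ N = 0 → N * (j + 1) ≤ n →
      h * r * (coeff j (F ^ n)) = 0 := by
  intro j
  induction j using Nat.strong_induction_on with
  | _ j ih =>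
    intro n h r hh hn
    have hNn : N ≤ n := le_trans (Nat.le_mul_of_pos_right N (by omega)) hn
    have hsplit : F ^ n = F ^ N * F ^ (n - N) := by
      rw [← pow_add]
      congr 1
      omega
    rw [hsplit, coeff_mul, Finset.mul_sum]
    apply Finset.sum_eq_zero
    rintro ⟨u, t⟩ hut
    rw [Finset.HasAntidiagonal.mem_antidiagonal] at hut
    by_cases hu : u = 0
    · subst hu
      have hc0 : coeff 0 (F ^ N) = (constantCoeff F) ^ N := by
        rw [coeff_zero_eq_constantCoeff_apply, map_pow]
      rw [hc0, ← mul_assoc, red_semicomm hh r, zero_mul]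
    · have htj : t < j := by omega
      have h2 : N * (t + 1) ≤ n - N := by
        have h3 : N * (t + 1) ≤ N * j := Nat.mul_le_mul_left _ (by omega)
        rw [Nat.mul_succ] at hn
        omega
      have := ih t htj (n - N) h (r * coeff u (F ^ N)) hh h2
      calc h * r * (coeff u (F ^ N) * coeff t (F ^ (n - N)))
          = h * (r * coeff u (F ^ N)) * coeff t (F ^ (n - N)) := by noncomm_ring
        _ = 0 := this

end Aux



/-- A ring `R` is *right Archimedean* if for every nonunit `a ∈ R`,
`⋂ n, R·aⁿ = {0}`. -/
def RightArchimedean (R : Type*) [Ring R] : Prop :=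
  ∀ a : R, ¬ IsUnit a → (⋂ n : ℕ, {x : R | ∃ r : R, x = r * a ^ n}) = {0}

/-- A ring `R` satisfies the *ACC on annihilators* if every ascending chain of
annihilator ideals `Ann(S) = {r | ∀ s ∈ S, s * r = 0}` stabilizes. -/
def AccOnAnnihilators (R : Type*) [Ring R] : Prop :=
  ∀ f : ℕ → Set R,
    (∀ n, ∃ S : Set R, f n = {r : R | ∀ s ∈ S, s * r = 0}) →
    (∀ n, f n ⊆ f (n + 1)) →
    ∃ N, ∀ n, N ≤ n → f n = f N

/-- If `R` is a reduced ring satisfying the ACC on annihilators which is right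
Archimedean, then the power series ring `R[[x]]` is reduced and right Archimedean. -/
theorem powerSeries_rightArchimedean_reduced (R : Type*) [Ring R] [IsReduced R]
    (hacc : AccOnAnnihilators R) (harch : RightArchimedean R) :
    IsReduced (PowerSeries R) ∧ RightArchimedean (PowerSeries R) := by
  refine ⟨powerSeries_isReduced, ?_⟩
  intro F hF
  set a := constantCoeff F with ha_def
  have ha : ¬ IsUnit a := fun h => hF (PowerSeries.isUnit_iff_constantCoeff.mpr h)
  obtain ⟨N, hN⟩ := hacc (fun n => {r : R | a ^ n * r = 0})
    (fun n => ⟨{a ^ n}, by ext r; simp⟩)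
    (fun n r hr => by
      show a ^ (n + 1) * r = 0
      rw [pow_succ', mul_assoc, hr, mul_zero])
  have stab : ∀ (h : R) (n : ℕ), N ≤ n → h * a ^ n = 0 → h * a ^ N = 0 := by
    intro h n hle hh
    have h1 : a ^ n * h = 0 := red_comm_zero hh
    have h2 : h ∈ ({r : R | a ^ N * r = 0} : Set R) := by
      rw [← hN n hle]; exact h1
    exact red_comm_zero h2
  apply Set.Subset.antisymm
  · intro G hG
    rw [Set.mem_iInter] at hG
    have hG' : ∀ n : ℕ, ∃ H : PowerSeries R, G = H * F ^ n := fun n => hG n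
    have hcoeff : ∀ m, coeff m G = 0 := by
      intro m
      induction m using Nat.strong_induction_on with
      | _ m ihm =>
        have key : ∀ n, N * (m + 1) ≤ n → ∃ h : R, coeff m G = h * a ^ n := by
          intro n hn
          obtain ⟨H, hH⟩ := hG' n
          have hNn : N ≤ n := le_trans (Nat.le_mul_of_pos_right N (by omega)) hn
          have inner : ∀ t, t ≤ m → coeff t G = coeff t H * a ^ n := by
            intro t
            induction t using Nat.strong_induction_on with
            | _ t iht =>
              intro htm
              have hs : ∀ p ∈ antidiagonal t, p ≠ (t, 0) →
                  coeff p.1 H * coeff p.2 (F ^ n) = 0 := by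
                rintro ⟨i, u⟩ hp hne
                rw [Finset.HasAntidiagonal.mem_antidiagonal] at hp
                have hu : u ≠ 0 := by
                  rintro rfl
                  exact hne (by rw [show i = t by omega])
                have hit : i < t := by omega
                have h1 : coeff i H * a ^ n = 0 := by
                  rw [← iht i hit (by omega), ihm i (by omega)]
                have h2 : coeff i H * a ^ N = 0 := stab _ n hNn h1
                have h3 : N * (u + 1) ≤ n :=
                  le_trans (Nat.mul_le_mul_left _ (by omega)) hn
                have := lemC F N u n (coeff i H) 1 h2 h3
                rwa [mul_one] at this
              rw [hH, coeff_mul, Finset.sum_eq_single_of_mem (t, 0) (by simp) hs,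
                coeff_zero_eq_constantCoeff_apply, map_pow]
          exact ⟨coeff m H, inner m le_rfl⟩
        have hmem : coeff m G ∈ ⋂ k : ℕ, {x : R | ∃ r : R, x = r * a ^ k} := by
          rw [Set.mem_iInter]
          intro k
          obtain ⟨h, hh⟩ := key (max k (N * (m + 1))) (le_max_right _ _)
          refine ⟨h * a ^ (max k (N * (m + 1)) - k), ?_⟩
          rw [hh, mul_assoc, ← pow_add, Nat.sub_add_cancel (le_max_left _ _)]
        rw [harch a ha] at hmem
        exact hmem
    show G ∈ ({0} : Set (PowerSeries R))
    exact Set.mem_singleton_iff.mpr (PowerSeries.ext fun n => by simp [hcoeff n])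
  · intro x hx
    rw [Set.mem_singleton_iff] at hx
    subst hx
    rw [Set.mem_iInter]
    exact fun n => ⟨0, (zero_mul _).symm⟩
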